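/- Let X, Y be complete separable metric spaces with metrics r_X, r_Y and Borel probability measures μ_X, μ_Y. Define the Eurandom distance d_Eur(X,Y) := inf over couplings μ̃ of μ_X, μ_Y of inf{ε > 0 : μ̃⊗μ̃{((x,y),(x',y')) : |r_X(x,x') − r_Y(y,y')| ≥ ε} < ε}. If there exist a metric space (Z,r_Z), isometric embeddings φ_X : X → Z, φ_Y : Y → Z and a coupling μ̂ of (φ_X)_*μ_X and (φ_Y)_*μ_Y with μ̂{(z,z') : r_Z(z,z') ≥ δ} < δ, then d_Eur(X,Y) < 2δ. -/

import Mathlib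

open Metric Set MeasureTheory ENNReal Filter Topology

/-- The Eurandom distance between two metric measure spaces:
`inf` over couplings `μ̃` of `μ_X` and `μ_Y` of
`inf {ε > 0 : μ̃⊗μ̃ {((x,y),(x',y')) : |r_X(x,x') − r_Y(y,y')| ≥ ε} < ε}`. -/
noncomputable def eurandomDist {X Y : Type*} [MetricSpace X] [MetricSpace Y]
    [MeasurableSpace X] [MeasurableSpace Y]
    (μX : Measure X) (μY : Measure Y) : ℝ :=
  sInf {ε : ℝ | 0 < ε ∧ ∃ m : Measure (X × Y),
    IsProbabilityMeasure m ∧ m.map Prod.fst = μX ∧ m.map Prod.snd = μY ∧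
    (m.prod m) {q : (X × Y) × (X × Y) |
      ε ≤ |dist q.1.1 q.2.1 - dist q.1.2 q.2.2|} < ENNReal.ofReal ε}

/-- If `μ_X` and `μ_Y` admit isometric embeddings into a common metric space `Z` and a
coupling `μ̂` of the pushforwards with `μ̂ {(z,z') : r_Z(z,z') ≥ δ} < δ`, then
`d_Eur(X, Y) < 2δ`.  (In particular `d_Eur ≤ 2 d_GPr`.) -/
theorem eurandomDist_lt_of_embedding_coupling {X Y Z : Type*}
    [MetricSpace X] [MetricSpace Y] [MetricSpace Z]
    [CompleteSpace X] [TopologicalSpace.SeparableSpace X]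
    [CompleteSpace Y] [TopologicalSpace.SeparableSpace Y]
    [MeasurableSpace X] [BorelSpace X] [MeasurableSpace Y] [BorelSpace Y]
    [MeasurableSpace Z] [BorelSpace Z]
    (μX : Measure X) (μY : Measure Y)
    [IsProbabilityMeasure μX] [IsProbabilityMeasure μY]
    (φX : X → Z) (hφX : Isometry φX) (φY : Y → Z) (hφY : Isometry φY)
    (μh : Measure (Z × Z)) [IsProbabilityMeasure μh]
    (h1 : μh.map Prod.fst = μX.map φX) (h2 : μh.map Prod.snd = μY.map φY)
    (δ : ℝ) (hδ : 0 < δ)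
    (h : μh {p : Z × Z | δ ≤ dist p.1 p.2} < ENNReal.ofReal δ) :
    eurandomDist μX μY < 2 * δ := by
  -- nonemptiness
  have hXne : Nonempty X := by
    by_contra hc
    rw [not_nonempty_iff] at hc
    have h1 : μX univ = 1 := measure_univ
    rw [Set.univ_eq_empty_iff.mpr hc, measure_empty] at h1
    exact zero_ne_one h1
  have hYne : Nonempty Y := by
    by_contra hc
    rw [not_nonempty_iff] at hc
    have h1 : μY univ = 1 := measure_univ
    rw [Set.univ_eq_empty_iff.mpr hc, measure_empty] at h1
    exact zero_ne_one h1
  -- measurable retractions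
  have hceX := hφX.isClosedEmbedding
  have hceY := hφY.isClosedEmbedding
  have hmeX : MeasurableEmbedding φX := hceX.measurableEmbedding
  have hmeY : MeasurableEmbedding φY := hceY.measurableEmbedding
  obtain ⟨ψX, hψXm, hψX⟩ := hmeX.exists_measurable_extend measurable_id (fun _ => hXne)
  obtain ⟨ψY, hψYm, hψY⟩ := hmeY.exists_measurable_extend measurable_id (fun _ => hYne)
  have eX : ∀ a, ψX (φX a) = a := fun a => congrFun hψX a
  have eY : ∀ a, ψY (φY a) = a := fun a => congrFun hψY a
  set F : Z × Z → X × Y := fun p => (ψX p.1, ψY p.2) with hF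
  have hFm : Measurable F := (hψXm.comp measurable_fst).prodMk (hψYm.comp measurable_snd)
  set m := μh.map F with hm
  haveI hmp : IsProbabilityMeasure m := Measure.isProbabilityMeasure_map hFm.aemeasurable
  -- marginals
  have hm1 : m.map Prod.fst = μX := by
    rw [hm, Measure.map_map measurable_fst hFm]
    have he : (Prod.fst ∘ F : Z × Z → X) = ψX ∘ Prod.fst := rfl
    rw [he, ← Measure.map_map hψXm measurable_fst, h1,
      Measure.map_map hψXm hmeX.measurable, hψX, Measure.map_id]
  have hm2 : m.map Prod.snd = μY := by
    rw [hm, Measure.map_map measurable_snd hFm]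
    have he : (Prod.snd ∘ F : Z × Z → Y) = ψY ∘ Prod.snd := rfl
    rw [he, ← Measure.map_map hψYm measurable_snd, h2,
      Measure.map_map hψYm hmeY.measurable, hψY, Measure.map_id]
  -- null sets: a.e. points lie in the ranges
  have hrX : MeasurableSet (range φX) := hceX.isClosed_range.measurableSet
  have hrY : MeasurableSet (range φY) := hceY.isClosed_range.measurableSet
  have hnull1 : μh {p : Z × Z | p.1 ∉ range φX} = 0 := by
    have he : {p : Z × Z | p.1 ∉ range φX} = Prod.fst ⁻¹' (range φX)ᶜ := rfl
    rw [he, ← Measure.map_apply measurable_fst hrX.compl, h1,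
      Measure.map_apply hmeX.measurable hrX.compl]
    simp
  have hnull2 : μh {p : Z × Z | p.2 ∉ range φY} = 0 := by
    have he : {p : Z × Z | p.2 ∉ range φY} = Prod.snd ⁻¹' (range φY)ᶜ := rfl
    rw [he, ← Measure.map_apply measurable_snd hrY.compl, h2,
      Measure.map_apply hmeY.measurable hrY.compl]
    simp
  set S : Set (Z × Z) := {p | p.1 ∈ range φX ∧ p.2 ∈ range φY} with hS
  have hSnull : μh Sᶜ = 0 := by
    refine measure_mono_null (t := {p : Z × Z | p.1 ∉ range φX} ∪ {p : Z × Z | p.2 ∉ range φY})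
      (fun p hp => ?_) (measure_union_null hnull1 hnull2)
    simp only [hS, mem_compl_iff, mem_setOf_eq, not_and_or] at hp
    exact hp
  have hSm : MeasurableSet S := (hrX.preimage measurable_fst).inter (hrY.preimage measurable_snd)
  -- choice of c' and t
  set L := μh {p : Z × Z | δ ≤ dist p.1 p.2} with hL
  have hLne : L ≠ ∞ := h.trans_le le_top |>.ne
  have hLr : L.toReal < δ := ENNReal.toReal_lt_of_lt_ofReal h
  set c : ℝ := max ((L.toReal + δ) / 2) (δ / 2) with hc
  have hcpos : 0 < c := lt_max_of_lt_right (by linarith)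
  have hcδ : c < δ := max_lt (by linarith) (by linarith)
  have hLc : L < ENNReal.ofReal c := by
    have h1 : L.toReal < c := lt_max_of_lt_left (by linarith)
    calc L = ENNReal.ofReal L.toReal := (ENNReal.ofReal_toReal hLne).symm
    _ < ENNReal.ofReal c := by
      exact (ENNReal.ofReal_lt_ofReal_iff hcpos).2 h1
  -- continuity from above
  have hdm : Measurable fun p : Z × Z => dist (φX (ψX p.1)) (φY (ψY p.2)) := by
    have hc2 : Continuous fun q : X × Y => dist (φX q.1) (φY q.2) :=
      (hφX.continuous.comp continuous_fst).dist (hφY.continuous.comp continuous_snd)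
    exact hc2.measurable.comp hFm
  set s : ℕ → Set (Z × Z) := fun n => {p | δ - 1 / (n + 1) ≤ dist p.1 p.2} with hs
  have hsm : ∀ n, NullMeasurableSet (s n) μh := by
    intro n
    have hmeas : MeasurableSet ({p : Z × Z | δ - 1 / (n + 1) ≤
        dist (φX (ψX p.1)) (φY (ψY p.2))} ∩ S) :=
      (hdm measurableSet_Ici).inter hSm
    refine ⟨_, hmeas, ?_⟩
    rw [MeasureTheory.ae_eq_set]
    constructor
    · refine measure_mono_null (fun p hp => ?_) hSnull
      rcases hp with ⟨hp1, hp2⟩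
      simp only [mem_inter_iff, mem_setOf_eq, not_and_or] at hp2
      rcases hp2 with hp2 | hp2
      · by_contra hpS'
        simp only [mem_compl_iff, not_not] at hpS'
        obtain ⟨⟨x, hx⟩, ⟨y, hy⟩⟩ := hpS'
        apply hp2
        simp only [hs, mem_setOf_eq] at hp1
        show δ - 1 / (↑n + 1) ≤ dist (φX (ψX p.1)) (φY (ψY p.2))
        rw [← hx, ← hy, eX x, eY y, hx, hy]
        exact hp1
      · exact hp2
    · refine measure_mono_null (fun p hp => ?_) hSnull
      rcases hp with ⟨⟨hp1, hpS⟩, hp2⟩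
      exfalso
      obtain ⟨⟨x, hx⟩, ⟨y, hy⟩⟩ := hpS
      apply hp2
      have hp1' : δ - 1 / (↑n + 1) ≤ dist (φX (ψX p.1)) (φY (ψY p.2)) := hp1
      rw [← hx, ← hy, eX x, eY y, hx, hy] at hp1'
      simpa only [hs, mem_setOf_eq] using hp1'
  have hanti : Antitone s := by
    intro n k hnk p hp
    simp only [hs, mem_setOf_eq] at hp ⊢
    have : (1 : ℝ) / (k + 1) ≤ 1 / (n + 1) := by
      apply one_div_le_one_div_of_le (by positivity)
      exact_mod_cast by omega
    linarith
  have hiInter : ⋂ n, s n = {p : Z × Z | δ ≤ dist p.1 p.2} := by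
    ext p
    simp only [mem_iInter, hs, mem_setOf_eq]
    constructor
    · intro hp
      by_contra hlt
      push_neg at hlt
      obtain ⟨n, hn⟩ := exists_nat_one_div_lt (sub_pos.2 hlt)
      have := hp n
      linarith
    · intro hp n
      have : (0:ℝ) < 1 / (n + 1) := by positivity
      linarith
  have htend : Tendsto (fun n => μh (s n)) atTop (𝓝 L) := by
    have h0 := tendsto_measure_iInter_atTop (μ := μh) hsm hanti ⟨0, measure_ne_top _ _⟩
    rw [hiInter] at h0
    exact h0
  have hev : ∀ᶠ n in atTop, μh (s n) < ENNReal.ofReal c :=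
    htend.eventually_lt_const hLc
  obtain ⟨N₁, hN₁⟩ := exists_nat_one_div_lt (sub_pos.2 hcδ)
  obtain ⟨n, hn⟩ := (hev.and (eventually_ge_atTop N₁)).exists
  have hAc : μh (s n) < ENNReal.ofReal c := hn.1
  set t : ℝ := δ - 1 / (n + 1) with ht
  have hct : c < t := by
    have h1 : (1 : ℝ) / (n + 1) ≤ 1 / (N₁ + 1) := by
      apply one_div_le_one_div_of_le (by positivity)
      exact_mod_cast by omega
    simp only [ht]
    linarith
  have htpos : 0 < t := hcpos.trans hct
  have htδ : t < δ := by
    have : (0:ℝ) < 1 / (n + 1) := by positivity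
    simp only [ht]; linarith
  set ε : ℝ := 2 * t with hε
  have hεpos : 0 < ε := by positivity
  -- the key measure bound
  set bad : Set ((X × Y) × (X × Y)) :=
    {q | ε ≤ |dist q.1.1 q.2.1 - dist q.1.2 q.2.2|} with hbad
  have hbadm : MeasurableSet bad := by
    have hcont : Continuous fun q : (X × Y) × (X × Y) =>
        |dist q.1.1 q.2.1 - dist q.1.2 q.2.2| :=
      ((continuous_fst.fst.dist continuous_snd.fst).sub
        (continuous_fst.snd.dist continuous_snd.snd)).abs
    exact hcont.measurable measurableSet_Ici
  have hprod : m.prod m = (μh.prod μh).map (Prod.map F F) :=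
    Measure.map_prod_map μh μh hFm hFm
  set E : Set ((Z × Z) × (Z × Z)) := Prod.map F F ⁻¹' bad with hE
  have hmapE : (m.prod m) bad = (μh.prod μh) E := by
    rw [hprod, Measure.map_apply (hFm.prodMap hFm) hbadm]
  set G : Set ((Z × Z) × (Z × Z)) := S ×ˢ S with hG
  have hGc : (μh.prod μh) Gᶜ = 0 := by
    have hsub : Gᶜ ⊆ (Sᶜ ×ˢ univ) ∪ ((univ : Set (Z × Z)) ×ˢ Sᶜ) := by
      intro q hq
      simp only [hG, mem_compl_iff, mem_prod, not_and_or] at hq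
      rcases hq with hq | hq
      · exact Or.inl ⟨hq, mem_univ _⟩
      · exact Or.inr ⟨mem_univ _, hq⟩
    refine measure_mono_null hsub (measure_union_null ?_ ?_)
    · rw [Measure.prod_prod, hSnull, zero_mul]
    · rw [Measure.prod_prod, hSnull, mul_zero]
  set A : Set (Z × Z) := s n with hA
  have hkey : E ∩ G ⊆ (A ×ˢ univ) ∪ ((univ : Set (Z × Z)) ×ˢ A) := by
    rintro ⟨⟨z1, z2⟩, ⟨z1', z2'⟩⟩ ⟨hqE, hqG⟩
    simp only [hG, mem_prod, hS, mem_setOf_eq] at hqG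
    obtain ⟨⟨⟨x, hx⟩, ⟨y, hy⟩⟩, ⟨⟨x', hx'⟩, ⟨y', hy'⟩⟩⟩ := hqG
    simp only [hE, mem_preimage, hbad, mem_setOf_eq, Prod.map, hF] at hqE
    subst hx hy hx' hy'
    rw [eX x, eX x', eY y, eY y'] at hqE
    have hdd : |dist x x' - dist y y'| ≤ dist (φX x) (φY y) + dist (φX x') (φY y') := by
      have := dist_dist_dist_le (φX x) (φX x') (φY y) (φY y')
      rwa [Real.dist_eq, hφX.dist_eq, hφY.dist_eq] at this
    by_contra hcon
    simp only [mem_union, mem_prod, mem_univ, and_true, true_and, hA, hs,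
      mem_setOf_eq, not_or, not_le] at hcon
    have : ε ≤ dist (φX x) (φY y) + dist (φX x') (φY y') := le_trans hqE hdd
    simp only [hε, ht] at this hcon
    linarith [hcon.1, hcon.2]
  have hbound : (m.prod m) bad < ENNReal.ofReal ε := by
    rw [hmapE]
    calc (μh.prod μh) E ≤ (μh.prod μh) ((E ∩ G) ∪ Gᶜ) := by
          refine measure_mono (fun q hq => ?_)
          by_cases hg : q ∈ G
          · exact Or.inl ⟨hq, hg⟩
          · exact Or.inr hg
      _ ≤ (μh.prod μh) (E ∩ G) + (μh.prod μh) Gᶜ := measure_union_le _ _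
      _ = (μh.prod μh) (E ∩ G) := by rw [hGc, add_zero]
      _ ≤ (μh.prod μh) ((A ×ˢ univ) ∪ ((univ : Set (Z × Z)) ×ˢ A)) := measure_mono hkey
      _ ≤ (μh.prod μh) (A ×ˢ univ) + (μh.prod μh) ((univ : Set (Z × Z)) ×ˢ A) :=
          measure_union_le _ _
      _ = μh A + μh A := by
          rw [Measure.prod_prod, Measure.prod_prod, measure_univ, mul_one, one_mul]
      _ < ENNReal.ofReal c + ENNReal.ofReal c := ENNReal.add_lt_add hAc hAc
      _ = ENNReal.ofReal (c + c) := (ENNReal.ofReal_add hcpos.le hcpos.le).symm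
      _ < ENNReal.ofReal ε := by
          refine (ENNReal.ofReal_lt_ofReal_iff hεpos).2 ?_
          simp only [hε]; linarith
  -- conclude
  have hmem : ε ∈ {ε : ℝ | 0 < ε ∧ ∃ m : Measure (X × Y),
      IsProbabilityMeasure m ∧ m.map Prod.fst = μX ∧ m.map Prod.snd = μY ∧
      (m.prod m) {q : (X × Y) × (X × Y) |
        ε ≤ |dist q.1.1 q.2.1 - dist q.1.2 q.2.2|} < ENNReal.ofReal ε} :=
    ⟨hεpos, m, hmp, hm1, hm2, hbound⟩
  have hbdd : BddBelow {ε : ℝ | 0 < ε ∧ ∃ m : Measure (X × Y),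
      IsProbabilityMeasure m ∧ m.map Prod.fst = μX ∧ m.map Prod.snd = μY ∧
      (m.prod m) {q : (X × Y) × (X × Y) |
        ε ≤ |dist q.1.1 q.2.1 - dist q.1.2 q.2.2|} < ENNReal.ofReal ε} :=
    ⟨0, fun x hx => hx.1.le⟩
  calc eurandomDist μX μY ≤ ε := csInf_le hbdd hmem
    _ < 2 * δ := by simp only [hε]; linarith
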